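/- Let γ ≥ 2. There exist positive constants c₁ and c₂ (depending only on γ) such that for every natural number j ≥ 3: c₁·j·γ^(−j) ≤ Σ γ^(−s₊−s₋) ≤ c₂·j·γ^(−j), where the sum is over all pairs of natural numbers (s₊, s₋) with 0 ≤ s₊ ≤ j, 0 ≤ s₋ ≤ j and s₊ + s₋ ≥ j − 2. -/

import Mathlib

open Finset

theorem stmt13 (γ : ℝ) (hγ : 2 ≤ γ) :
    ∃ c₁ c₂ : ℝ, 0 < c₁ ∧ 0 < c₂ ∧
      ∀ j : ℕ, 3 ≤ j →
        c₁ * j * γ ^ (-(j : ℤ)) ≤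
          (∑ p ∈ (Finset.range (j + 1) ×ˢ Finset.range (j + 1)).filter
              (fun p => j ≤ p.1 + p.2 + 2), γ ^ (-(p.1 : ℤ) - (p.2 : ℤ))) ∧
        (∑ p ∈ (Finset.range (j + 1) ×ˢ Finset.range (j + 1)).filter
              (fun p => j ≤ p.1 + p.2 + 2), γ ^ (-(p.1 : ℤ) - (p.2 : ℤ))) ≤
          c₂ * j * γ ^ (-(j : ℤ)) := by
  have hγ0 : (0:ℝ) < γ := by linarith
  have hpos : ∀ k : ℤ, (0:ℝ) < γ ^ k := fun k => zpow_pos hγ0 k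
  refine ⟨1, 6 * γ ^ 2, one_pos, by positivity, fun j hj => ?_⟩
  set A := (Finset.range (j + 1) ×ˢ Finset.range (j + 1)).filter
      (fun p => j ≤ p.1 + p.2 + 2) with hA
  constructor
  · -- lower bound
    have hsub : (range (j+1)).image (fun s => (s, j - s)) ⊆ A := by
      intro p hp
      simp only [mem_image, mem_range] at hp
      obtain ⟨s, hs, rfl⟩ := hp
      simp only [hA, mem_filter, mem_product, mem_range]
      omega
    have hsum : ∑ p ∈ (range (j+1)).image (fun s => (s, j - s)),
        γ ^ (-(p.1 : ℤ) - (p.2 : ℤ)) = ((j:ℝ)+1) * γ ^ (-(j:ℤ)) := by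
      rw [Finset.sum_image (by intro a _ b _ h; exact congrArg Prod.fst h)]
      have h1 : ∀ s ∈ range (j+1),
          γ ^ (-(s:ℤ) - ((j - s : ℕ) : ℤ)) = γ ^ (-(j:ℤ)) := by
        intro s hs
        rw [mem_range] at hs
        congr 1
        omega
      rw [Finset.sum_congr rfl h1, Finset.sum_const, card_range, nsmul_eq_mul]
      push_cast; ring
    calc 1 * (j:ℝ) * γ ^ (-(j:ℤ)) ≤ ((j:ℝ)+1) * γ ^ (-(j:ℤ)) := by
          have := (hpos (-(j:ℤ))).le
          nlinarith
      _ = ∑ p ∈ (range (j+1)).image (fun s => (s, j - s)),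
            γ ^ (-(p.1 : ℤ) - (p.2 : ℤ)) := hsum.symm
      _ ≤ ∑ p ∈ A, γ ^ (-(p.1 : ℤ) - (p.2 : ℤ)) :=
          Finset.sum_le_sum_of_subset_of_nonneg hsub (fun p _ _ => (hpos _).le)
  · -- upper bound
    have hmap : ∀ p ∈ A, p.1 + p.2 ∈ Finset.Icc (j-2) (2*j) := by
      intro p hp
      simp only [hA, mem_filter, mem_product, mem_range] at hp
      simp only [mem_Icc]
      omega
    rw [← Finset.sum_fiberwise_of_maps_to hmap]
    have hcard : ∀ k, ((A.filter (fun p => p.1 + p.2 = k)).card : ℝ) ≤ (j:ℝ) + 1 := by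
      intro k
      have h : (A.filter (fun p => p.1 + p.2 = k)).card ≤ (range (j+1)).card := by
        apply Finset.card_le_card_of_injOn (fun p => p.1)
        · intro p hp
          simp only [hA, coe_filter, Set.mem_setOf_eq, mem_filter, mem_product,
            mem_range, mem_coe] at hp ⊢
          omega
        · intro a ha b hb h
          simp only [hA, coe_filter, Set.mem_setOf_eq, mem_filter, mem_product,
            mem_range] at ha hb
          have h1 : a.1 = b.1 := h
          have : a.2 = b.2 := by omega
          exact Prod.ext h1 this
      rw [card_range] at h
      exact_mod_cast h
    have hinner : ∀ k ∈ Finset.Icc (j-2) (2*j),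
        (∑ p ∈ A.filter (fun p => p.1 + p.2 = k), γ ^ (-(p.1 : ℤ) - (p.2 : ℤ)))
          ≤ ((j:ℝ)+1) * γ ^ (-(k:ℤ)) := by
      intro k _
      have heq : ∀ p ∈ A.filter (fun p => p.1 + p.2 = k),
          γ ^ (-(p.1 : ℤ) - (p.2 : ℤ)) = γ ^ (-(k:ℤ)) := by
        intro p hp
        rw [mem_filter] at hp
        congr 1
        have h2 : p.1 + p.2 = k := hp.2
        omega
      rw [Finset.sum_congr rfl heq, Finset.sum_const, nsmul_eq_mul]
      exact mul_le_mul_of_nonneg_right (hcard k) (hpos _).le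
    calc (∑ k ∈ Finset.Icc (j-2) (2*j),
            ∑ p ∈ A.filter (fun p => p.1 + p.2 = k), γ ^ (-(p.1 : ℤ) - (p.2 : ℤ)))
        ≤ ∑ k ∈ Finset.Icc (j-2) (2*j), ((j:ℝ)+1) * γ ^ (-(k:ℤ)) :=
          Finset.sum_le_sum hinner
      _ = ((j:ℝ)+1) * ∑ k ∈ Finset.Icc (j-2) (2*j), γ ^ (-(k:ℤ)) := by
          rw [Finset.mul_sum]
      _ ≤ ((j:ℝ)+1) * (2 * (γ ^ 2 * γ ^ (-(j:ℤ)))) := by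
          apply mul_le_mul_of_nonneg_left _ (by positivity)
          have hre : ∑ k ∈ Finset.Icc (j-2) (2*j), γ ^ (-(k:ℤ))
              = ∑ i ∈ range (2*j + 1 - (j-2)), γ ^ (-(((j-2) + i : ℕ):ℤ)) := by
            rw [← Finset.Ico_add_one_right_eq_Icc, Finset.sum_Ico_eq_sum_range]
          rw [hre]
          have hterm : ∀ i ∈ range (2*j + 1 - (j-2)),
              γ ^ (-(((j-2) + i : ℕ):ℤ)) = (γ ^ 2 * γ ^ (-(j:ℤ))) * (γ⁻¹) ^ i := by
            intro i _
            have h1 : (-(((j-2) + i : ℕ):ℤ)) = (2 - (j:ℤ)) + (-(i:ℤ)) := by omega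
            rw [h1, zpow_add₀ hγ0.ne', zpow_neg, zpow_natCast, ← inv_pow]
            congr 1
            rw [sub_eq_add_neg, zpow_add₀ hγ0.ne']
            congr 1
          rw [Finset.sum_congr rfl hterm, ← Finset.mul_sum, mul_comm]
          apply mul_le_mul_of_nonneg_right _ (by positivity)
          calc ∑ i ∈ range (2*j + 1 - (j-2)), (γ⁻¹) ^ i
              ≤ ∑ i ∈ range (2*j + 1 - (j-2)), (1/(2:ℝ)) ^ i := by
                apply Finset.sum_le_sum
                intro i _
                apply pow_le_pow_left₀ (by positivity)
                rw [one_div]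
                exact inv_anti₀ (by norm_num) hγ
            _ ≤ 2 := sum_geometric_two_le _
      _ ≤ 6 * γ ^ 2 * (j:ℝ) * γ ^ (-(j:ℤ)) := by
          have h1 : (0:ℝ) < γ ^ 2 * γ ^ (-(j:ℤ)) := by positivity
          have h2 : ((j:ℝ)+1) * 2 ≤ 6 * (j:ℝ) := by
            have : (3:ℝ) ≤ (j:ℝ) := by exact_mod_cast hj
            linarith
          nlinarith [h1, h2]
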